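/- Pumping of normalized decompositions: if u·v ∼ u and v̄ ≈ᵘ_L v where v̄ is a fixed representative, and the class of v̄ is final (i.e., u·v̄ ∼ u → u·v̄^ω ∈ L and this holds for all extensions: ∀ e ∈ Σ*, u·v̄·e ∼ u → u·(v̄·e)^ω ∈ L), then for every k ≥ 1, v̄ ≈ᵘ_L v^k, i.e., the k-fold repetition v^k lies in the same ≈ᵘ_L-class as v̄. -/

import Mathlib

/-- Concatenation of a finite word `u` with an ω-word `w`. -/
def finCat {α : Type*} (u : List α) (w : ℕ → α) : ℕ → α :=
  fun n => if h : n < u.length then u.get ⟨n, h⟩ else w (n - u.length)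

/-- The ω-word `v^ω`, the infinite repetition of a nonempty finite word `v`. -/
def repWord {α : Type*} (v : List α) (h : 0 < v.length) : ℕ → α :=
  fun n => v.get ⟨n % v.length, Nat.mod_lt n h⟩

/-- `u · v^ω ∈ L` (this requires `v` to be nonempty). -/
def OmegaIn {α : Type*} (L : Set (ℕ → α)) (u v : List α) : Prop :=
  ∃ h : 0 < v.length, finCat u (repWord v h) ∈ L

/-- The leading right congruence `u₁ ∼ u₂`. -/
def Leading {α : Type*} (L : Set (ℕ → α)) (u₁ u₂ : List α) : Prop :=
  ∀ w : ℕ → α, finCat u₁ w ∈ L ↔ finCat u₂ w ∈ L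

/-- The limit progress relation `x ≈ᵘ_L y`. -/
def LimitRel {α : Type*} (L : Set (ℕ → α)) (u x y : List α) : Prop :=
  ∀ v : List α,
    (Leading L (u ++ x ++ v) u → OmegaIn L u (x ++ v)) ↔
    (Leading L (u ++ y ++ v) u → OmegaIn L u (y ++ v))

/-- The syntactic progress relation `x ≈ᵘ_S y`. -/
def SynRel {α : Type*} (L : Set (ℕ → α)) (u x y : List α) : Prop :=
  Leading L (u ++ x) (u ++ y) ∧
  ∀ v : List α, Leading L (u ++ x ++ v) u →
    (OmegaIn L u (x ++ v) ↔ OmegaIn L u (y ++ v))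

/-- The periodic progress relation `x ≈ᵘ_P y`. -/
def PerRel {α : Type*} (L : Set (ℕ → α)) (u x y : List α) : Prop :=
  ∀ v : List α, OmegaIn L u (x ++ v) ↔ OmegaIn L u (y ++ v)

/-- The recurrent progress relation `x ≈ᵘ_R y`. -/
def RecRel {α : Type*} (L : Set (ℕ → α)) (u x y : List α) : Prop :=
  ∀ v : List α,
    (Leading L (u ++ x ++ v) u ∧ OmegaIn L u (x ++ v)) ↔
    (Leading L (u ++ y ++ v) u ∧ OmegaIn L u (y ++ v))

/-- The progress right pro-congruence `x ≈ᵘ_N y`. -/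
def ProRel {α : Type*} (L : Set (ℕ → α)) (u x y : List α) : Prop :=
  ∀ v : List α,
    (Leading L (u ++ x ++ v) u ∧ Leading L (u ++ y ++ v) u) →
    (OmegaIn L u (x ++ v) ↔ OmegaIn L u (y ++ v))

theorem limitRel_pumping {α : Type*} (L : Set (ℕ → α)) (u v vb : List α)
    (hnorm : Leading L (u ++ v) u) (hrep : LimitRel L u vb v)
    (hfinal : ∀ e : List α, Leading L (u ++ vb ++ e) u → OmegaIn L u (vb ++ e)) :
    ∀ k : ℕ, 1 ≤ k → LimitRel L u vb (List.replicate k v).flatten := by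
  have hstar : ∀ e, Leading L (u ++ v ++ e) u → OmegaIn L u (v ++ e) := by
    intro e
    exact (hrep e).mp (fun h => hfinal e h)
  intro k hk v'
  obtain ⟨n, rfl⟩ := Nat.exists_eq_add_of_le hk
  have hjoin : (List.replicate (1 + n) v).flatten = v ++ (List.replicate n v).flatten := by
    rw [Nat.add_comm, List.replicate_succ]; rfl
  constructor
  · intro _ hlead
    rw [hjoin] at hlead ⊢
    simp only [List.append_assoc] at hlead ⊢
    have := hstar ((List.replicate n v).flatten ++ v')
    simp only [List.append_assoc] at this
    exact this hlead
  · intro _ hlead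
    exact hfinal v' hlead
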